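/- arXiv:1306.2046 — 2 statements merged into one kernel-verified Lean document; each statement's English description precedes it below -/
import Mathlib

section
/- The two-point Taylor coefficients A_n(a,z), B_n(a,z) of f(t) = (1-zt)^{-a} at t = 0 and t = 1 satisfy the recurrence A_{n+1} = \frac{-z(a+2n) A_n + [1 + n(2-z)] B_n}{n+1} and B_{n+1} = \frac{z(2-z)(a+2n) A_n + [z(a+2) + n(6z - z^2 - 4) - 2] B_n}{(n+1)(1-z)}, where A_n, B_n are defined by the explicit formulas A_n(a,z) = \frac{1}{n!}\sum_{k=0}^n \frac{(n+k-1)!}{k!(n-k)!}[(-1)^n n - (-1)^k k (1-z)^{k-a-n}](a)_{n-k} z^{n-k} (for n \geq 1, A_0 = 1) and B_n(a,z) = \frac{1}{n!}\sum_{k=0}^n \frac{(n+k)!}{k!(n-k)!}[(-1)^k (1-z)^{k-a-n} + (-1)^{n+1}](a)_{n-k} z^{n-k} (for n \geq 1, B_0 = (1-z)^{-a} - 1). -/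
open Complex

noncomputable def Acoef (a z : ℂ) : ℕ → ℂ
  | 0 => 1
  | n + 1 =>
      (1 / ((n + 1).factorial : ℂ)) *
        ∑ k ∈ Finset.range (n + 2),
          ((n + 1 + k - 1).factorial : ℂ) / ((k.factorial : ℂ) * ((n + 1 - k).factorial : ℂ)) *
            ((-1) ^ (n + 1) * (n + 1 : ℂ) - (-1) ^ k * (k : ℂ) * (1 - z) ^ ((k : ℂ) - a - (n + 1 : ℂ))) *
            (ascPochhammer ℂ (n + 1 - k)).eval a * z ^ (n + 1 - k)

noncomputable def Bcoef (a z : ℂ) : ℕ → ℂ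
  | 0 => (1 - z) ^ (-a) - 1
  | n + 1 =>
      (1 / ((n + 1).factorial : ℂ)) *
        ∑ k ∈ Finset.range (n + 2),
          ((n + 1 + k).factorial : ℂ) / ((k.factorial : ℂ) * ((n + 1 - k).factorial : ℂ)) *
            ((-1) ^ k * (1 - z) ^ ((k : ℂ) - a - (n + 1 : ℂ)) + (-1) ^ (n + 2)) *
            (ascPochhammer ℂ (n + 1 - k)).eval a * z ^ (n + 1 - k)

set_option maxHeartbeats 1000000

open Finset


noncomputable def PS (a z : ℂ) (N : ℕ) : ℂ :=
  ∑ k ∈ Finset.range (N+1),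
    ((N + k - 1).factorial : ℂ) / ((k.factorial : ℂ) * ((N - k).factorial : ℂ)) *
      (ascPochhammer ℂ (N - k)).eval a * z ^ (N - k)

noncomputable def QS (a z : ℂ) (N : ℕ) : ℂ :=
  ∑ k ∈ Finset.range (N+1),
    ((N + k - 1).factorial : ℂ) / ((k.factorial : ℂ) * ((N - k).factorial : ℂ)) *
      ((-1) ^ k * (k : ℂ) * (1 - z) ^ k) * (ascPochhammer ℂ (N - k)).eval a * z ^ (N - k)

noncomputable def SS (a z : ℂ) (N : ℕ) : ℂ :=
  ∑ k ∈ Finset.range (N+1),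
    ((N + k).factorial : ℂ) / ((k.factorial : ℂ) * ((N - k).factorial : ℂ)) *
      (ascPochhammer ℂ (N - k)).eval a * z ^ (N - k)

noncomputable def RS (a z : ℂ) (N : ℕ) : ℂ :=
  ∑ k ∈ Finset.range (N+1),
    ((N + k).factorial : ℂ) / ((k.factorial : ℂ) * ((N - k).factorial : ℂ)) *
      ((-1) ^ k * (1 - z) ^ k) * (ascPochhammer ℂ (N - k)).eval a * z ^ (N - k)

lemma tele (M : ℕ) (X Y G : ℕ → ℂ) (h0 : G 0 = 0) (htop : X M = - G M)
    (hk : ∀ k, k < M → X k = Y k + (G (k+1) - G k)) :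
    ∑ k ∈ Finset.range (M+1), X k = ∑ k ∈ Finset.range M, Y k := by
  rw [Finset.sum_range_succ]
  have h1 : ∑ k ∈ Finset.range M, X k = ∑ k ∈ Finset.range M, (Y k + (G (k+1) - G k)) :=
    Finset.sum_congr rfl (fun k hk' => hk k (Finset.mem_range.mp hk'))
  rw [h1, Finset.sum_add_distrib, Finset.sum_range_sub (fun i => G i), h0, htop]
  ring

lemma natC1_ne (m : ℕ) : ((m:ℂ)+1) ≠ 0 := by
  have h : ((m:ℂ)+1) = ((m+1 : ℕ) : ℂ) := by push_cast; ring
  rw [h]; exact_mod_cast Nat.succ_ne_zero m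

lemma natC2_ne (m : ℕ) : ((m:ℂ)+2) ≠ 0 := by
  have h : ((m:ℂ)+2) = ((m+2 : ℕ) : ℂ) := by push_cast; ring
  rw [h]; exact_mod_cast Nat.succ_ne_zero (m+1)

lemma factC_ne (k : ℕ) : ((k.factorial : ℂ)) ≠ 0 := by
  exact_mod_cast Nat.factorial_ne_zero k


noncomputable def GI (a z : ℂ) (m k : ℕ) : ℂ :=
  if k = 0 ∨ m + 2 < k then 0 else
    -(2*(m:ℂ)+3) * (((m+k).factorial : ℂ)/(((k-1).factorial:ℂ)*((m+2-k).factorial:ℂ))) *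
      (ascPochhammer ℂ (m+2-k)).eval a * z^(m+2-k)


lemma lemI (a z : ℂ) (m : ℕ) :
    ((m:ℂ)+2) * PS a z (m+2) =
      ((m:ℂ)+1)*z*(a+2*((m:ℂ)+1)) * PS a z (m+1) +
        (1 + 2*((m:ℂ)+1) - ((m:ℂ)+1)*z) * SS a z (m+1) := by
  unfold PS SS
  rw [Finset.mul_sum, Finset.mul_sum, Finset.mul_sum, ← Finset.sum_add_distrib]
  refine tele (m+2) _ _ (GI a z m) (by simp [GI]) ?_ ?_
  · -- top : X (m+2) = - GI a z m (m+2)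
    rw [GI, if_neg (by omega : ¬((m+2:ℕ) = 0 ∨ m+2 < m+2))]
    simp only [show m+2+(m+2)-1 = (2*m+2)+1 from by omega,
      show m+2-(m+2) = 0 from by omega, show m+(m+2) = (2*m+1)+1 from by omega,
      show m+2-1 = m+1 from by omega, show 2*m+2 = (2*m+1)+1 from by omega,
      Nat.factorial_zero, ascPochhammer_zero, Polynomial.eval_one, pow_zero]
    have h1 : (((m+2).factorial :ℕ):ℂ) ≠ 0 := factC_ne _
    have h2 : (((m+1).factorial :ℕ):ℂ) ≠ 0 := factC_ne _
    field_simp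
    push_cast [Nat.factorial_succ]
    ring
  · intro k hk'
    match k with
    | 0 =>
      rw [GI, if_neg (by omega : ¬((1:ℕ) = 0 ∨ m+2 < 1)),
        GI, if_pos (by omega : (0:ℕ) = 0 ∨ m+2 < 0)]
      simp only [show m+2+0-1 = m+1 from by omega, show m+2-0 = (m+1)+1 from by omega,
        show m+1+0-1 = m from by omega, show m+1-0 = m+1 from by omega,
        show m+1+0 = m+1 from by omega, show m+(1:ℕ) = m+1 from rfl,
        show (1:ℕ)-1 = 0 from rfl, show m+2-1 = m+1 from by omega,
        Nat.factorial_zero, ascPochhammer_succ_eval]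
      have h1 : (((m+1).factorial :ℕ):ℂ) ≠ 0 := factC_ne _
      have h2 : ((((m+1)+1).factorial :ℕ):ℂ) ≠ 0 := factC_ne _
      have h3 : ((m.factorial :ℕ):ℂ) ≠ 0 := factC_ne _
      field_simp
      push_cast [Nat.factorial_succ]
      ring
    | j+1 =>
      obtain ⟨i, rfl⟩ : ∃ i, m = j + i := ⟨m - j, by omega⟩
      rw [GI, if_neg (by omega : ¬(j+1+1 = 0 ∨ j+i+2 < j+1+1)),
        GI, if_neg (by omega : ¬(j+1 = 0 ∨ j+i+2 < j+1))]
      simp only [show j+i+2+(j+1)-1 = (2*j+i+1)+1 from by omega,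
        show j+i+2-(j+1) = i+1 from by omega,
        show j+i+1+(j+1)-1 = (2*j+i)+1 from by omega,
        show j+i+1-(j+1) = i from by omega,
        show j+i+1+(j+1) = (2*j+i+1)+1 from by omega,
        show j+i+(j+1) = (2*j+i)+1 from by omega,
        show j+1-1 = j from by omega,
        show j+i+(j+1+1) = (2*j+i+1)+1 from by omega,
        show j+1+1-1 = j+1 from by omega,
        show j+i+2-(j+1+1) = i from by omega,
        show (2:ℕ)*j+i+1 = (2*j+i)+1 from by omega,
        ascPochhammer_succ_eval]
      have h1 : ((j.factorial :ℕ):ℂ) ≠ 0 := factC_ne _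
      have h2 : ((i.factorial :ℕ):ℂ) ≠ 0 := factC_ne _
      have h3 : (((j+1).factorial :ℕ):ℂ) ≠ 0 := factC_ne _
      have h4 : (((i+1).factorial :ℕ):ℂ) ≠ 0 := factC_ne _
      field_simp
      push_cast [Nat.factorial_succ]
      ring

noncomputable def GIII (a z : ℂ) (m k : ℕ) : ℂ :=
  if k = 0 ∨ m + 2 < k then 0 else
    (((m+k).factorial : ℂ)/(((k-1).factorial:ℂ)*((m+2-k).factorial:ℂ))) *
      (-(4*(m:ℂ)+6) + (4*(m:ℂ)+6 - ((m:ℂ)+2-(k:ℂ)))*z) *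
      (ascPochhammer ℂ (m+2-k)).eval a * z^(m+2-k)

lemma lemIII (a z : ℂ) (m : ℕ) :
    (1-z) * SS a z (m+2) =
      ((m:ℂ)+1)*z*(2-z)*(a+2*((m:ℂ)+1)) * PS a z (m+1) +
        (-(z*(a+2)+((m:ℂ)+1)*(6*z-z^2-4)-2)) * SS a z (m+1) := by
  unfold PS SS
  rw [Finset.mul_sum, Finset.mul_sum, Finset.mul_sum, ← Finset.sum_add_distrib]
  refine tele (m+2) _ _ (GIII a z m) (by simp [GIII]) ?_ ?_
  · rw [GIII, if_neg (by omega : ¬((m+2:ℕ) = 0 ∨ m+2 < m+2))]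
    simp only [show m+2+(m+2) = (((2*m+1)+1)+1)+1 from by omega,
      show m+2-(m+2) = 0 from by omega, show m+(m+2) = ((2*m)+1)+1 from by omega,
      show m+2-1 = (m)+1 from by omega, show (2:ℕ)*m+1 = (2*m)+1 from by omega,
      Nat.factorial_zero, ascPochhammer_zero, Polynomial.eval_one, pow_zero]
    have h1 : ((((m+1)+1).factorial :ℕ):ℂ) ≠ 0 := factC_ne _
    have h2 : (((m+1).factorial :ℕ):ℂ) ≠ 0 := factC_ne _
    field_simp
    push_cast [Nat.factorial_succ]
    ring
  · intro k hk'
    match k with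
    | 0 =>
      rw [GIII, if_neg (by omega : ¬((1:ℕ) = 0 ∨ m+2 < 1)),
        GIII, if_pos (by omega : (0:ℕ) = 0 ∨ m+2 < 0)]
      simp only [show m+2+0 = (m+1)+1 from by omega, show m+2-0 = (m+1)+1 from by omega,
        show m+1+0-1 = m from by omega, show m+1-0 = m+1 from by omega,
        show m+1+0 = m+1 from by omega, show m+(1:ℕ) = m+1 from rfl,
        show (1:ℕ)-1 = 0 from rfl, show m+2-1 = m+1 from by omega,
        Nat.factorial_zero, ascPochhammer_succ_eval]
      have h1 : (((m+1).factorial :ℕ):ℂ) ≠ 0 := factC_ne _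
      have h2 : ((((m+1)+1).factorial :ℕ):ℂ) ≠ 0 := factC_ne _
      have h3 : ((m.factorial :ℕ):ℂ) ≠ 0 := factC_ne _
      field_simp
      push_cast [Nat.factorial_succ]
      ring
    | j+1 =>
      obtain ⟨i, rfl⟩ : ∃ i, m = j + i := ⟨m - j, by omega⟩
      rw [GIII, if_neg (by omega : ¬(j+1+1 = 0 ∨ j+i+2 < j+1+1)),
        GIII, if_neg (by omega : ¬(j+1 = 0 ∨ j+i+2 < j+1))]
      simp only [show j+i+2+(j+1) = (((2*j+i)+1)+1)+1 from by omega,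
        show j+i+2-(j+1) = i+1 from by omega,
        show j+i+1+(j+1)-1 = (2*j+i)+1 from by omega,
        show j+i+1-(j+1) = i from by omega,
        show j+i+1+(j+1) = ((2*j+i)+1)+1 from by omega,
        show j+i+(j+1) = (2*j+i)+1 from by omega,
        show j+1-1 = j from by omega,
        show j+i+(j+1+1) = ((2*j+i)+1)+1 from by omega,
        show j+1+1-1 = j+1 from by omega,
        show j+i+2-(j+1+1) = i from by omega,
        ascPochhammer_succ_eval]
      have h1 : ((j.factorial :ℕ):ℂ) ≠ 0 := factC_ne _
      have h2 : ((i.factorial :ℕ):ℂ) ≠ 0 := factC_ne _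
      have h3 : (((j+1).factorial :ℕ):ℂ) ≠ 0 := factC_ne _
      have h4 : (((i+1).factorial :ℕ):ℂ) ≠ 0 := factC_ne _
      field_simp
      push_cast [Nat.factorial_succ]
      ring

noncomputable def GII (a z : ℂ) (m k : ℕ) : ℂ :=
  if k = 0 ∨ m + 2 < k then 0 else
    (-1)^k * (((m+k).factorial : ℂ)/(((k-1).factorial:ℂ)*((m+2-k).factorial:ℂ))) *
      (-(2*(m:ℂ)+3) + ((m:ℂ)+2-(k:ℂ))*z) * (1-z)^k *
      (ascPochhammer ℂ (m+2-k)).eval a * z^(m+2-k)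

lemma lemII (a z : ℂ) (m : ℕ) :
    QS a z (m+2) =
      (-(1-z)*(z*(a+2*((m:ℂ)+1)))) * QS a z (m+1) +
        (-(1-z)*(1 + 2*((m:ℂ)+1) - ((m:ℂ)+1)*z)) * RS a z (m+1) := by
  unfold QS RS
  rw [Finset.mul_sum, Finset.mul_sum, ← Finset.sum_add_distrib]
  refine tele (m+2) (fun k => _) _ (GII a z m) (by simp [GII]) ?_ ?_
  · rw [GII, if_neg (by omega : ¬((m+2:ℕ) = 0 ∨ m+2 < m+2))]
    simp only [show m+2+(m+2)-1 = ((2*m+1)+1)+1 from by omega,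
      show m+2-(m+2) = 0 from by omega, show m+(m+2) = ((2*m)+1)+1 from by omega,
      show m+2-1 = m+1 from by omega, show (2:ℕ)*m+1 = (2*m)+1 from by omega,
      Nat.factorial_zero, ascPochhammer_zero, Polynomial.eval_one, pow_zero]
    have h1 : ((((m+1)+1).factorial :ℕ):ℂ) ≠ 0 := factC_ne _
    have h2 : (((m+1).factorial :ℕ):ℂ) ≠ 0 := factC_ne _
    field_simp
    push_cast [Nat.factorial_succ]
    ring
  · intro k hk'
    match k with
    | 0 =>
      rw [GII, if_neg (by omega : ¬((1:ℕ) = 0 ∨ m+2 < 1)),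
        GII, if_pos (by omega : (0:ℕ) = 0 ∨ m+2 < 0)]
      simp only [show m+2+0-1 = m+1 from by omega, show m+2-0 = (m+1)+1 from by omega,
        show m+1+0-1 = m from by omega, show m+1-0 = m+1 from by omega,
        show m+1+0 = m+1 from by omega, show m+(1:ℕ) = m+1 from rfl,
        show (1:ℕ)-1 = 0 from rfl, show m+2-1 = m+1 from by omega,
        Nat.factorial_zero, ascPochhammer_succ_eval]
      have h1 : (((m+1).factorial :ℕ):ℂ) ≠ 0 := factC_ne _
      have h2 : ((((m+1)+1).factorial :ℕ):ℂ) ≠ 0 := factC_ne _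
      have h3 : ((m.factorial :ℕ):ℂ) ≠ 0 := factC_ne _
      field_simp
      push_cast [Nat.factorial_succ]
      ring
    | j+1 =>
      obtain ⟨i, rfl⟩ : ∃ i, m = j + i := ⟨m - j, by omega⟩
      rw [GII, if_neg (by omega : ¬(j+1+1 = 0 ∨ j+i+2 < j+1+1)),
        GII, if_neg (by omega : ¬(j+1 = 0 ∨ j+i+2 < j+1))]
      simp only [show j+i+2+(j+1)-1 = ((2*j+i)+1)+1 from by omega,
        show j+i+2-(j+1) = i+1 from by omega,
        show j+i+1+(j+1)-1 = (2*j+i)+1 from by omega,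
        show j+i+1-(j+1) = i from by omega,
        show j+i+1+(j+1) = ((2*j+i)+1)+1 from by omega,
        show j+i+(j+1) = (2*j+i)+1 from by omega,
        show j+1-1 = j from by omega,
        show j+i+(j+1+1) = ((2*j+i)+1)+1 from by omega,
        show j+1+1-1 = j+1 from by omega,
        show j+i+2-(j+1+1) = i from by omega,
        ascPochhammer_succ_eval]
      have h1 : ((j.factorial :ℕ):ℂ) ≠ 0 := factC_ne _
      have h2 : ((i.factorial :ℕ):ℂ) ≠ 0 := factC_ne _
      have h3 : (((j+1).factorial :ℕ):ℂ) ≠ 0 := factC_ne _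
      have h4 : (((i+1).factorial :ℕ):ℂ) ≠ 0 := factC_ne _
      field_simp
      push_cast [Nat.factorial_succ]
      ring

noncomputable def GIV (a z : ℂ) (m k : ℕ) : ℂ :=
  if k = 0 ∨ m + 2 < k then 0 else
    (-1)^k * (((m+k).factorial : ℂ)/(((k-1).factorial:ℂ)*((m+2-k).factorial:ℂ))) *
      (-(4*(m:ℂ)+6) + ((m:ℂ)+2-(k:ℂ))*z) * (1-z)^k *
      (ascPochhammer ℂ (m+2-k)).eval a * z^(m+2-k)

lemma lemIV (a z : ℂ) (m : ℕ) :
    RS a z (m+2) =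
      (-(z*(2-z)*(a+2*((m:ℂ)+1)))) * QS a z (m+1) +
        (z*(a+2)+((m:ℂ)+1)*(6*z-z^2-4)-2) * RS a z (m+1) := by
  unfold QS RS
  rw [Finset.mul_sum, Finset.mul_sum, ← Finset.sum_add_distrib]
  refine tele (m+2) (fun k => _) _ (GIV a z m) (by simp [GIV]) ?_ ?_
  · rw [GIV, if_neg (by omega : ¬((m+2:ℕ) = 0 ∨ m+2 < m+2))]
    simp only [show m+2+(m+2) = (((2*m+1)+1)+1)+1 from by omega,
      show m+2-(m+2) = 0 from by omega, show m+(m+2) = ((2*m)+1)+1 from by omega,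
      show m+2-1 = m+1 from by omega, show (2:ℕ)*m+1 = (2*m)+1 from by omega,
      Nat.factorial_zero, ascPochhammer_zero, Polynomial.eval_one, pow_zero]
    have h1 : ((((m+1)+1).factorial :ℕ):ℂ) ≠ 0 := factC_ne _
    have h2 : (((m+1).factorial :ℕ):ℂ) ≠ 0 := factC_ne _
    field_simp
    push_cast [Nat.factorial_succ]
    ring
  · intro k hk'
    match k with
    | 0 =>
      rw [GIV, if_neg (by omega : ¬((1:ℕ) = 0 ∨ m+2 < 1)),
        GIV, if_pos (by omega : (0:ℕ) = 0 ∨ m+2 < 0)]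
      simp only [show m+2+0 = (m+1)+1 from by omega, show m+2-0 = (m+1)+1 from by omega,
        show m+1+0-1 = m from by omega, show m+1-0 = m+1 from by omega,
        show m+1+0 = m+1 from by omega, show m+(1:ℕ) = m+1 from rfl,
        show (1:ℕ)-1 = 0 from rfl, show m+2-1 = m+1 from by omega,
        Nat.factorial_zero, ascPochhammer_succ_eval]
      have h1 : (((m+1).factorial :ℕ):ℂ) ≠ 0 := factC_ne _
      have h2 : ((((m+1)+1).factorial :ℕ):ℂ) ≠ 0 := factC_ne _
      have h3 : ((m.factorial :ℕ):ℂ) ≠ 0 := factC_ne _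
      field_simp
      push_cast [Nat.factorial_succ]
      ring
    | j+1 =>
      obtain ⟨i, rfl⟩ : ∃ i, m = j + i := ⟨m - j, by omega⟩
      rw [GIV, if_neg (by omega : ¬(j+1+1 = 0 ∨ j+i+2 < j+1+1)),
        GIV, if_neg (by omega : ¬(j+1 = 0 ∨ j+i+2 < j+1))]
      simp only [show j+i+2+(j+1) = (((2*j+i)+1)+1)+1 from by omega,
        show j+i+2-(j+1) = i+1 from by omega,
        show j+i+1+(j+1)-1 = (2*j+i)+1 from by omega,
        show j+i+1-(j+1) = i from by omega,
        show j+i+1+(j+1) = ((2*j+i)+1)+1 from by omega,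
        show j+i+(j+1) = (2*j+i)+1 from by omega,
        show j+1-1 = j from by omega,
        show j+i+(j+1+1) = ((2*j+i)+1)+1 from by omega,
        show j+1+1-1 = j+1 from by omega,
        show j+i+2-(j+1+1) = i from by omega,
        ascPochhammer_succ_eval]
      have h1 : ((j.factorial :ℕ):ℂ) ≠ 0 := factC_ne _
      have h2 : ((i.factorial :ℕ):ℂ) ≠ 0 := factC_ne _
      have h3 : (((j+1).factorial :ℕ):ℂ) ≠ 0 := factC_ne _
      have h4 : (((i+1).factorial :ℕ):ℂ) ≠ 0 := factC_ne _
      field_simp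
      push_cast [Nat.factorial_succ]
      ring

lemma cpow_split (a z : ℂ) (hu : (1:ℂ)-z ≠ 0) (k N : ℕ) :
    (1-z) ^ ((k:ℂ) - a - ((N:ℂ)+1)) = (1-z)^k * ((1-z)^(-a) * ((1-z)^(N+1))⁻¹) := by
  have h : (k:ℂ) - a - ((N:ℂ)+1) = (k:ℂ) + (-a + -(((N+1:ℕ):ℂ))) := by push_cast; ring
  rw [h, cpow_add _ _ hu, cpow_add _ _ hu, cpow_natCast, cpow_neg, cpow_neg, cpow_natCast]

lemma repA (a z : ℂ) (hu : (1:ℂ)-z ≠ 0) (n : ℕ) :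
    Acoef a z (n+1) = (1/((n+1).factorial : ℂ)) *
      ((-1)^(n+1) * ((n:ℂ)+1) * PS a z (n+1) - (1-z)^(-a) * ((1-z)^(n+1))⁻¹ * QS a z (n+1)) := by
  rw [Acoef]
  congr 1
  unfold PS QS
  rw [Finset.mul_sum, Finset.mul_sum, ← Finset.sum_sub_distrib]
  refine Finset.sum_congr rfl (fun k _ => ?_)
  rw [cpow_split a z hu k n]
  push_cast
  ring

lemma repB (a z : ℂ) (hu : (1:ℂ)-z ≠ 0) (n : ℕ) :
    Bcoef a z (n+1) = (1/((n+1).factorial : ℂ)) *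
      ((1-z)^(-a) * ((1-z)^(n+1))⁻¹ * RS a z (n+1) + (-1)^(n+2) * SS a z (n+1)) := by
  rw [Bcoef]
  congr 1
  unfold RS SS
  rw [Finset.mul_sum, Finset.mul_sum, ← Finset.sum_add_distrib]
  refine Finset.sum_congr rfl (fun k _ => ?_)
  rw [cpow_split a z hu k n]
  push_cast
  ring


theorem two_point_coeff_recurrence (a z : ℂ) (hz : ¬(z.im = 0 ∧ 1 ≤ z.re)) (n : ℕ) :
    Acoef a z (n + 1) =
      (-z * (a + 2 * n) * Acoef a z n + (1 + n * (2 - z)) * Bcoef a z n) / (n + 1) ∧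
    Bcoef a z (n + 1) =
      (z * (2 - z) * (a + 2 * n) * Acoef a z n +
          (z * (a + 2) + n * (6 * z - z ^ 2 - 4) - 2) * Bcoef a z n) /
        ((n + 1) * (1 - z)) := by
  have hu : (1:ℂ) - z ≠ 0 := by
    intro h
    exact hz ⟨by
      have : z = 1 := by linear_combination -h
      simp [this], by
      have : z = 1 := by linear_combination -h
      simp [this]⟩
  obtain (rfl | ⟨m, rfl⟩) : n = 0 ∨ ∃ m, n = m + 1 := by
    cases n with | zero => exact Or.inl rfl | succ m => exact Or.inr ⟨m, rfl⟩
  · -- base case n = 0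
    have hA0 : Acoef a z 0 = 1 := rfl
    have hB0 : Bcoef a z 0 = (1-z)^(-a) - 1 := rfl
    have hPS : PS a z 1 = a*z + 1 := by
      simp [PS, Finset.sum_range_succ, ascPochhammer_one]
    have hQS : QS a z 1 = -(1-z) := by
      simp [QS, Finset.sum_range_succ, ascPochhammer_one]
    have hSS : SS a z 1 = a*z + 2 := by
      simp [SS, Finset.sum_range_succ, ascPochhammer_one]
      try ring
    have hRS : RS a z 1 = a*z - 2*(1-z) := by
      simp [RS, Finset.sum_range_succ, ascPochhammer_one]
      try ring
    have h01 : (0:ℕ)+1 = 1 := rfl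
    constructor
    · rw [repA a z hu 0, hA0, hB0, h01, hPS, hQS]
      push_cast
      field_simp
      ring
    · rw [repB a z hu 0, hA0, hB0, h01, hRS, hSS]
      push_cast
      field_simp
      ring
  · -- main case
    have hm2 : ((m:ℂ)+2) ≠ 0 := natC2_ne m
    have hm1 : ((m:ℂ)+1) ≠ 0 := natC1_ne m
    have hupow1 : ((1:ℂ)-z)^(m+1) ≠ 0 := pow_ne_zero _ hu
    have hupow2 : ((1:ℂ)-z)^(m+2) ≠ 0 := pow_ne_zero _ hu
    have hf1 : (((m+1).factorial:ℕ):ℂ) ≠ 0 := factC_ne _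
    have hfrec : ((m+2).factorial :ℕ) = (m+2)*(m+1).factorial := by
      rw [show m+2 = (m+1)+1 from rfl, Nat.factorial_succ]
    have hA1 : (((m+1).factorial:ℕ):ℂ) * ((1:ℂ)-z)^(m+1) * Acoef a z (m+1) =
        (-1)^(m+1)*((m:ℂ)+1)*((1:ℂ)-z)^(m+1)*PS a z (m+1)
          - (1-z)^(-a)*QS a z (m+1) := by
      rw [repA a z hu m]
      push_cast
      field_simp
    have hB1 : (((m+1).factorial:ℕ):ℂ) * ((1:ℂ)-z)^(m+1) * Bcoef a z (m+1) =
        (1-z)^(-a)*RS a z (m+1)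
          + (-1)^(m+2)*((1:ℂ)-z)^(m+1)*SS a z (m+1) := by
      rw [repB a z hu m]
      push_cast
      field_simp
    have hA2 : ((m:ℂ)+2) * (((m+1).factorial:ℕ):ℂ) * ((1:ℂ)-z)^(m+2) * Acoef a z (m+2) =
        (-1)^(m+2)*((m:ℂ)+2)*((1:ℂ)-z)^(m+2)*PS a z (m+2)
          - (1-z)^(-a)*QS a z (m+2) := by
      rw [show m+2 = m+1+1 from rfl, repA a z hu (m+1)]
      rw [show m+1+1 = m+2 from rfl, hfrec]
      push_cast
      field_simp
      ring
    have hB2 : ((m:ℂ)+2) * (((m+1).factorial:ℕ):ℂ) * ((1:ℂ)-z)^(m+2) * Bcoef a z (m+2) =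
        (1-z)^(-a)*RS a z (m+2)
          + (-1)^(m+3)*((1:ℂ)-z)^(m+2)*SS a z (m+2) := by
      rw [show m+2 = m+1+1 from rfl, repB a z hu (m+1)]
      rw [show m+1+1 = m+2 from rfl, show m+1+2 = m+3 from rfl, hfrec]
      push_cast
      field_simp
    have hC : ((m:ℂ)+2) * (((m+1).factorial:ℕ):ℂ) * ((1:ℂ)-z)^(m+2) ≠ 0 :=
      mul_ne_zero (mul_ne_zero hm2 hf1) hupow2
    constructor
    · push_cast
      rw [eq_div_iff (by exact_mod_cast natC2_ne m : ((m:ℂ)+1+1) ≠ 0)]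
      apply mul_left_cancel₀ hC
      linear_combination (((m:ℂ)+2))*hA2 + (z*(a+2*((m:ℂ)+1))*((m:ℂ)+2)*(1-z))*hA1
        - ((1+((m:ℂ)+1)*(2-z))*((m:ℂ)+2)*(1-z))*hB1
        + ((-1)^(m+2)*((m:ℂ)+2)*((1:ℂ)-z)^(m+2))*(lemI a z m)
        - (((m:ℂ)+2)*(1-z)^(-a))*(lemII a z m)
    · push_cast
      rw [eq_div_iff (mul_ne_zero (by exact_mod_cast natC2_ne m : ((m:ℂ)+1+1) ≠ 0) hu)]
      apply mul_left_cancel₀ hC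
      linear_combination (((m:ℂ)+2)*(1-z))*hB2
        - (z*(2-z)*(a+2*((m:ℂ)+1))*((m:ℂ)+2)*(1-z))*hA1
        - ((z*(a+2)+((m:ℂ)+1)*(6*z-z^2-4)-2)*((m:ℂ)+2)*(1-z))*hB1
        + (((m:ℂ)+2)*(1-z)*(1-z)^(-a))*(lemIV a z m)
        + ((-1)^(m+3)*((m:ℂ)+2)*((1:ℂ)-z)^(m+2))*(lemIII a z m)
end

section
/- If f(t) = \sum_{n=0}^\infty [A_n + B_n t] t^n (t-1)^n is a convergent two-point Taylor expansion on a Cassini oval neighborhood of {0,1}, then f'(t) = \sum_{n=0}^\infty \{[(2n+1)B_n - (n+1)A_{n+1}] + (n+1)(2A_{n+1} + B_{n+1}) t\} t^n (t-1)^n on that region. -/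
open Filter Set

lemma coeff_bounds (r : ℝ) (f : ℂ → ℂ) (A B : ℕ → ℂ)
    (hf : ∀ t : ℂ, ‖t * (t - 1)‖ < r →
      HasSum (fun n : ℕ => (A n + B n * t) * (t ^ n * (t - 1) ^ n)) (f t))
    (s : ℝ) (hs0 : 0 < s) (hsr : s < r) :
    ∃ CA CB : ℝ, 0 ≤ CA ∧ 0 ≤ CB ∧
      (∀ n, ‖A n‖ * s ^ n ≤ CA) ∧ (∀ n, ‖B n‖ * s ^ n ≤ CB) := by
  set τ : ℝ := (1 + Real.sqrt (1 + 4 * s)) / 2 with hτ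
  have hsq : Real.sqrt (1 + 4 * s) ^ 2 = 1 + 4 * s := by
    rw [Real.sq_sqrt]; linarith
  have hsqrt1 : 1 ≤ Real.sqrt (1 + 4 * s) := by
    have := Real.sqrt_le_sqrt (show (1:ℝ) ≤ 1 + 4 * s by linarith)
    simpa using this
  have hτ1 : 1 ≤ τ := by rw [hτ]; linarith
  have hττ : τ * (τ - 1) = s := by
    have h := hsq
    rw [hτ]; ring_nf; ring_nf at h; linarith
  have key : ∀ σ : ℝ, σ * (σ - 1) = s → ∃ C : ℝ, 0 ≤ C ∧
      ∀ n, ‖A n + B n * (σ : ℂ)‖ * s ^ n ≤ C := by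
    intro σ hσ
    have hσc : (σ : ℂ) * ((σ : ℂ) - 1) = (s : ℂ) := by
      push_cast [← hσ]; ring
    have hnorm : ‖(σ : ℂ) * ((σ : ℂ) - 1)‖ < r := by
      rw [hσc, Complex.norm_real, Real.norm_of_nonneg hs0.le]; exact hsr
    have hsum := (hf σ hnorm).summable
    have htend := hsum.tendsto_atTop_zero.norm
    simp only [norm_zero] at htend
    obtain ⟨C, hC⟩ := htend.bddAbove_range
    refine ⟨C, le_trans (norm_nonneg _) (hC ⟨0, rfl⟩), fun n => ?_⟩
    have h1 : ‖(A n + B n * (σ:ℂ)) * ((σ:ℂ) ^ n * ((σ:ℂ) - 1) ^ n)‖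
        = ‖A n + B n * (σ:ℂ)‖ * s ^ n := by
      rw [norm_mul, ← mul_pow, hσc, norm_pow, Complex.norm_real,
        Real.norm_of_nonneg hs0.le]
    exact h1.symm.trans_le (hC ⟨n, rfl⟩)
  obtain ⟨C₁, hC₁0, hC₁⟩ := key τ hττ
  obtain ⟨C₂, hC₂0, hC₂⟩ := key (1 - τ) (by nlinarith [hττ])
  have hBb : ∀ n, ‖B n‖ * s ^ n ≤ C₁ + C₂ := by
    intro n
    have hs : (0:ℝ) ≤ s ^ n := by positivity
    have hdiff : B n * ((τ : ℂ) - ((1:ℝ) - τ : ℝ))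
        = (A n + B n * (τ:ℂ)) - (A n + B n * ((1:ℝ) - τ : ℝ)) := by
      push_cast; ring
    have hge : (1:ℝ) ≤ ‖(τ : ℂ) - ((1:ℝ) - τ : ℝ)‖ := by
      have h2 : ((τ : ℂ) - ((1:ℝ) - τ : ℝ)) = ((2*τ - 1 : ℝ) : ℂ) := by push_cast; ring
      rw [h2, Complex.norm_real, Real.norm_of_nonneg (by linarith)]
      linarith
    calc ‖B n‖ * s ^ n = ‖B n‖ * 1 * s ^ n := by ring
      _ ≤ ‖B n‖ * ‖(τ : ℂ) - ((1:ℝ) - τ : ℝ)‖ * s ^ n := by gcongr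
      _ = ‖B n * ((τ : ℂ) - ((1:ℝ) - τ : ℝ))‖ * s ^ n := by rw [norm_mul]
      _ = ‖(A n + B n * (τ:ℂ)) - (A n + B n * ((1:ℝ) - τ : ℝ))‖ * s ^ n := by rw [hdiff]
      _ ≤ (‖A n + B n * (τ:ℂ)‖ + ‖A n + B n * ((1:ℝ) - τ : ℝ)‖) * s ^ n :=
          mul_le_mul_of_nonneg_right (norm_sub_le _ _) hs
      _ = ‖A n + B n * (τ:ℂ)‖ * s ^ n + ‖A n + B n * ((1:ℝ) - τ : ℝ)‖ * s ^ n := by ring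
      _ ≤ C₁ + C₂ := add_le_add (hC₁ n) (hC₂ n)
  refine ⟨C₁ + (C₁ + C₂) * τ, C₁ + C₂, by positivity, by linarith, fun n => ?_, hBb⟩
  have hs : (0:ℝ) ≤ s ^ n := by positivity
  have hA : ‖A n‖ ≤ ‖A n + B n * (τ:ℂ)‖ + ‖B n‖ * τ := by
    have h1 := norm_sub_le (A n + B n * (τ:ℂ)) (B n * (τ:ℂ))
    simp only [add_sub_cancel_right] at h1
    have h2 : ‖B n * (τ:ℂ)‖ = ‖B n‖ * τ := by
      rw [norm_mul, Complex.norm_real, Real.norm_of_nonneg (by linarith)]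
    rw [h2] at h1; exact h1
  calc ‖A n‖ * s ^ n ≤ (‖A n + B n * (τ:ℂ)‖ + ‖B n‖ * τ) * s ^ n :=
        mul_le_mul_of_nonneg_right hA hs
    _ = ‖A n + B n * (τ:ℂ)‖ * s ^ n + ‖B n‖ * s ^ n * τ := by ring
    _ ≤ C₁ + (C₁ + C₂) * τ :=
        add_le_add (hC₁ n) (mul_le_mul_of_nonneg_right (hBb n) (by linarith))

theorem two_point_derivative (r : ℝ) (hr : 0 < r) (f : ℂ → ℂ) (A B : ℕ → ℂ)
    (hf : ∀ t : ℂ, ‖t * (t - 1)‖ < r →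
      HasSum (fun n : ℕ => (A n + B n * t) * (t ^ n * (t - 1) ^ n)) (f t)) :
    ∀ t : ℂ, ‖t * (t - 1)‖ < r →
      HasSum (fun n : ℕ =>
          (((2 * n + 1 : ℂ) * B n - (n + 1 : ℂ) * A (n + 1)) +
            (n + 1 : ℂ) * (2 * A (n + 1) + B (n + 1)) * t) * (t ^ n * (t - 1) ^ n))
        (deriv f t) := by
  intro t ht
  -- setup of radii
  set u₀ : ℝ := ‖t * (t - 1)‖ with hu₀
  have hu₀0 : 0 ≤ u₀ := norm_nonneg _
  set d : ℝ := (r - u₀) / 3 with hd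
  have hd0 : 0 < d := by rw [hd]; linarith
  set ρ : ℝ := u₀ + d with hρ
  set s : ℝ := u₀ + 2 * d with hs
  have hρ0 : 0 < ρ := by rw [hρ]; linarith
  have hρs : ρ < s := by rw [hρ, hs]; linarith
  have hs0 : 0 < s := by rw [hs]; linarith
  have hsr : s < r := by rw [hs, hd]; linarith
  have hρr : ρ < r := by linarith
  set q : ℝ := ρ / s with hq
  have hq0 : 0 ≤ q := by positivity
  have hq1 : q < 1 := by rw [hq, div_lt_one hs0]; exact hρs
  obtain ⟨CA, CB, hCA0, hCB0, hCA, hCB⟩ := coeff_bounds r f A B hf s hs0 hsr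
  set K : ℝ := CA + CB * (1 + ρ) with hK
  have hK0 : 0 ≤ K := by positivity
  set C2 : ℝ := K * (3 + 2 * ρ) / ρ with hC2
  have hC20 : 0 ≤ C2 := by positivity
  -- summable bound
  set u : ℕ → ℝ := fun n => CB * q ^ n + C2 * ((n : ℝ) * q ^ n) with hu
  have husum : Summable u := by
    apply Summable.add
    · exact (summable_geometric_of_lt_one hq0 hq1).mul_left CB
    · have h := summable_pow_mul_geometric_of_norm_lt_one 1
        (r := q) (by rwa [Real.norm_of_nonneg hq0])
      simpa [pow_one] using h.mul_left C2
  -- the terms and their derivatives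
  set g : ℕ → ℂ → ℂ := fun n y => (A n + B n * y) * (y ^ n * (y - 1) ^ n) with hg
  set D : ℕ → ℂ → ℂ := fun n y =>
    B n * (y * (y - 1)) ^ n +
      (A n + B n * y) * ((n : ℂ) * (y * (y - 1)) ^ (n - 1) * (2 * y - 1)) with hD
  have hderiv : ∀ n (y : ℂ), HasDerivAt (g n) (D n y) y := by
    intro n y
    have h1 : HasDerivAt (fun y : ℂ => y * (y - 1)) (1 * (y - 1) + y * 1) y :=
      (hasDerivAt_id y).mul ((hasDerivAt_id y).sub_const 1)
    have h2 := h1.pow n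
    have h3 : HasDerivAt (fun y : ℂ => A n + B n * y) (B n * 1) y :=
      ((hasDerivAt_id y).const_mul (B n)).const_add (A n)
    have h4 := h3.mul h2
    have hfun : (fun y : ℂ => (A n + B n * y) * (y * (y - 1)) ^ n) = g n := by
      funext z; rw [hg]; simp only [mul_pow]
    rw [show ((fun y : ℂ => A n + B n * y) * (fun y : ℂ => y * (y - 1)) ^ n)
      = (fun y : ℂ => (A n + B n * y) * (y * (y - 1)) ^ n) from by
        funext z; simp only [Pi.mul_apply, Pi.pow_apply]] at h4
    simp only [Pi.pow_apply] at h4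
    rw [hfun] at h4
    refine h4.congr_deriv ?_
    rw [hD]; ring
  -- coefficient norm bounds in division form
  have hBn : ∀ n, ‖B n‖ ≤ CB / s ^ n := fun n =>
    (le_div_iff₀ (pow_pos hs0 n)).mpr (hCB n)
  have hKn : ∀ n (y : ℂ), ‖y‖ ≤ 1 + ρ → ‖A n + B n * y‖ ≤ K / s ^ n := by
    intro n y hy
    rw [le_div_iff₀ (pow_pos hs0 n)]
    calc ‖A n + B n * y‖ * s ^ n ≤ (‖A n‖ + ‖B n‖ * ‖y‖) * s ^ n := by
          have := norm_add_le (A n) (B n * y)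
          rw [norm_mul] at this
          exact mul_le_mul_of_nonneg_right this (by positivity)
      _ = ‖A n‖ * s ^ n + ‖B n‖ * s ^ n * ‖y‖ := by ring
      _ ≤ CA + CB * (1 + ρ) := by
          refine add_le_add (hCA n) ?_
          have h1 : ‖B n‖ * s ^ n * ‖y‖ ≤ CB * ‖y‖ :=
            mul_le_mul_of_nonneg_right (hCB n) (norm_nonneg y)
          have h2 : CB * ‖y‖ ≤ CB * (1 + ρ) :=
            mul_le_mul_of_nonneg_left hy hCB0
          linarith
      _ = K := hK.symm
  -- norm of points in the region
  have hyn : ∀ y : ℂ, ‖y * (y - 1)‖ ≤ ρ → ‖y‖ ≤ 1 + ρ := by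
    intro y hy
    rcases le_or_gt ‖y‖ 1 with h | h
    · linarith
    · have h1 : ‖y‖ - 1 ≤ ‖y - 1‖ := by
        have := norm_sub_norm_le y 1
        simpa using this
      have h2 : ‖y * (y - 1)‖ = ‖y‖ * ‖y - 1‖ := norm_mul _ _
      nlinarith [norm_nonneg (y - 1)]
  -- the ball
  have hVopen : IsOpen {y : ℂ | ‖y * (y - 1)‖ < ρ} := by
    have : Continuous fun y : ℂ => ‖y * (y - 1)‖ :=
      (continuous_id.mul (continuous_id.sub continuous_const)).norm
    exact isOpen_lt this continuous_const
  have htV : t ∈ {y : ℂ | ‖y * (y - 1)‖ < ρ} := by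
    show ‖t * (t - 1)‖ < ρ
    rw [← hu₀, hρ]; linarith
  obtain ⟨ε, hε, hball⟩ := Metric.isOpen_iff.mp hVopen t htV
  have hsne : s ≠ 0 := ne_of_gt hs0
  have hρne : ρ ≠ 0 := ne_of_gt hρ0
  -- generic bounds
  have hBw : ∀ n (z : ℂ), ‖z‖ ≤ ρ → ‖B n * z ^ n‖ ≤ CB * q ^ n := by
    intro n z hz
    rw [norm_mul, norm_pow]
    calc ‖B n‖ * ‖z‖ ^ n ≤ (CB / s ^ n) * ρ ^ n := by
          apply mul_le_mul (hBn n) (pow_le_pow_left₀ (norm_nonneg z) hz n)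
            (by positivity) (by positivity)
      _ = CB * q ^ n := by rw [hq, div_pow]; field_simp
  have hboundD : ∀ n (y : ℂ), y ∈ Metric.ball t ε → ‖D n y‖ ≤ u n := by
    intro n y hy
    have hyρ : ‖y * (y - 1)‖ ≤ ρ := (hball hy).le
    have hy1 : ‖y‖ ≤ 1 + ρ := hyn y hyρ
    have hwn : ∀ k : ℕ, ‖(y * (y - 1)) ^ k‖ ≤ ρ ^ k := fun k => by
      rw [norm_pow]; exact pow_le_pow_left₀ (norm_nonneg _) hyρ k
    match n with
    | 0 =>
      have h0 : D 0 y = B 0 := by rw [hD]; simp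
      have h0' : u 0 = CB + C2 * 0 := by rw [hu]; simp
      rw [h0, h0']
      have := hBn 0
      simp only [pow_zero, div_one] at this
      linarith
    | (m+1) =>
      have h2y : ‖2 * y - 1‖ ≤ 3 + 2 * ρ := by
        calc ‖2 * y - 1‖ ≤ ‖(2:ℂ) * y‖ + ‖(1:ℂ)‖ := norm_sub_le _ _
          _ = 2 * ‖y‖ + 1 := by
              rw [norm_mul, norm_one, Complex.norm_ofNat]
          _ ≤ 3 + 2 * ρ := by linarith
      have hterm1 : ‖B (m+1) * (y * (y - 1)) ^ (m+1)‖ ≤ CB * q ^ (m+1) :=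
        hBw (m+1) _ hyρ
      have hterm2 : ‖(A (m+1) + B (m+1) * y) *
          ((((m:ℕ)+1 : ℕ) : ℂ) * (y * (y - 1)) ^ m * (2 * y - 1))‖
          ≤ C2 * (((m:ℝ)+1) * q ^ (m+1)) := by
        rw [norm_mul, norm_mul, norm_mul]
        have hnc : ‖(((m:ℕ)+1 : ℕ) : ℂ)‖ = (m:ℝ)+1 := by
          rw [Complex.norm_natCast]; push_cast; ring
        rw [hnc]
        calc ‖A (m+1) + B (m+1) * y‖ * (((m:ℝ)+1) * ‖(y * (y - 1)) ^ m‖ * ‖2 * y - 1‖)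
            ≤ (K / s ^ (m+1)) * (((m:ℝ)+1) * ρ ^ m * (3 + 2 * ρ)) := by
              apply mul_le_mul (hKn (m+1) y hy1)
              · apply mul_le_mul
                · apply mul_le_mul_of_nonneg_left (hwn m) (by positivity)
                · exact h2y
                · exact norm_nonneg _
                · positivity
              · positivity
              · positivity
          _ = C2 * (((m:ℝ)+1) * q ^ (m+1)) := by
              rw [hC2, hq, div_pow]
              field_simp
              ring
      calc ‖D (m+1) y‖ ≤ ‖B (m+1) * (y * (y - 1)) ^ (m+1)‖ +
            ‖(A (m+1) + B (m+1) * y) *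
              ((((m:ℕ)+1 : ℕ) : ℂ) * (y * (y - 1)) ^ m * (2 * y - 1))‖ := by
            rw [hD]; exact norm_add_le _ _
        _ ≤ CB * q ^ (m+1) + C2 * (((m:ℝ)+1) * q ^ (m+1)) := add_le_add hterm1 hterm2
        _ = u (m+1) := by rw [hu]; push_cast; ring
  -- apply the differentiation theorem on the ball
  have hmem : t ∈ Metric.ball t ε := Metric.mem_ball_self hε
  have hg0 : Summable fun n => g n t := (hf t ht).summable
  have hres := hasDerivAt_tsum_of_isPreconnected husum Metric.isOpen_ball
    ((convex_ball t ε).isPreconnected) (fun n y _ => hderiv n y) hboundD hmem hg0 hmem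
  have hfeq : f =ᶠ[nhds t] fun z => ∑' n, g n z := by
    filter_upwards [Metric.ball_mem_nhds t hε] with y hy
    exact ((hf y ((hball hy).trans hρr)).tsum_eq).symm
  have hfd : HasDerivAt f (∑' n, D n t) t := hres.congr_of_eventuallyEq hfeq
  have hDt : deriv f t = ∑' n, D n t := hfd.deriv
  -- rearrangement of the series
  have hsummD : Summable fun n => D n t :=
    Summable.of_norm_bounded husum fun n => hboundD n t hmem
  set w : ℂ := t * (t - 1) with hw
  have hwρ : ‖w‖ ≤ ρ := by rw [hw, ← hu₀]; rw [hρ]; linarith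
  set P : ℕ → ℂ := fun n => B n * w ^ n with hP
  set Q : ℕ → ℂ := fun n =>
    (A n + B n * t) * ((n : ℂ) * w ^ (n - 1) * (2 * t - 1)) with hQ
  set R : ℕ → ℂ := fun n => 2 * (n : ℂ) * B n * w ^ n with hR
  have hsummP : Summable P :=
    Summable.of_norm_bounded ((summable_geometric_of_lt_one hq0 hq1).mul_left CB)
      fun n => hBw n w hwρ
  have hsummR : Summable R := by
    refine Summable.of_norm_bounded (g := fun n => 2 * (CB * ((n:ℝ) * q ^ n))) ?_ ?_
    · have h := summable_pow_mul_geometric_of_norm_lt_one 1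
        (r := q) (by rwa [Real.norm_of_nonneg hq0])
      simpa [pow_one, mul_comm, mul_assoc, mul_left_comm] using (h.mul_left (2*CB))
    · intro n
      rw [hR]
      simp only []
      rw [norm_mul, norm_mul, norm_mul, Complex.norm_natCast, Complex.norm_ofNat, norm_pow]
      calc 2 * (n:ℝ) * ‖B n‖ * ‖w‖ ^ n ≤ 2 * (n:ℝ) * (CB / s ^ n) * ρ ^ n := by
            apply mul_le_mul
            · exact mul_le_mul_of_nonneg_left (hBn n) (by positivity)
            · exact pow_le_pow_left₀ (norm_nonneg w) hwρ n
            · positivity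
            · positivity
        _ = 2 * (CB * ((n:ℝ) * q ^ n)) := by rw [hq, div_pow]; field_simp
  have hDPQ : ∀ n, D n t = P n + Q n := fun n => rfl
  have hQsum : HasSum Q (∑' n, D n t - ∑' n, P n) := by
    have h := hsummD.hasSum.sub hsummP.hasSum
    have he : (fun n => D n t - P n) = Q := by
      funext n; rw [hDPQ n]; ring
    rwa [he] at h
  have hQ0 : Q 0 = 0 := by rw [hQ]; simp
  have hQ1 : HasSum (fun n => Q (n + 1)) (∑' n, D n t - ∑' n, P n) := by
    refine (hasSum_nat_add_iff 1).mpr ?_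
    simpa [Finset.sum_range_one, hQ0] using hQsum
  have hR0 : R 0 = 0 := by rw [hR]; simp
  have hR1 : HasSum (fun n => R (n + 1)) (∑' n, R n) := by
    refine (hasSum_nat_add_iff 1).mpr ?_
    simpa [Finset.sum_range_one, hR0] using hsummR.hasSum
  have htel : HasSum (fun n => R n - R (n + 1)) 0 := by
    simpa using hsummR.hasSum.sub hR1
  have hfinal : HasSum (fun n => P n + Q (n + 1) + (R n - R (n + 1)))
      (∑' n, P n + (∑' n, D n t - ∑' n, P n) + 0) :=
    (hsummP.hasSum.add hQ1).add htel
  rw [hDt]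
  convert hfinal using 1
  · funext n
    rw [hP, hQ, hR]
    simp only [Nat.add_sub_cancel, hw, mul_pow, pow_succ]
    push_cast
    ring
  · ring
end
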